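/- Let ≼ be a convex preorder on the positive root system Φ₊ of an affine Kac–Moody root system, and let β ∈ Φ₊ be imaginary (a multiple of the null root δ). If β = ∑_{a=1}^{b} γ_a with all γ_a ∈ Φ₊ and either γ_a ≼ β for all a, or γ_a ≽ β for all a, then every γ_a is imaginary. -/

import Mathlib

/-!
Statement 16: For the convex preorder on positive roots induced by an injective
ℚ-linear functional `χ` via `β ≼ γ ⟺ χ(β)/ht(β) ≤ χ(γ)/ht(γ)` (as licensed by the
context), if an imaginary positive root `β` (a positive multiple of the null root `δ`)
is written as `β = ∑ γ_a` with all `γ_a` positive roots and either `γ_a ≼ β` for all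
`a` or `γ_a ≽ β` for all `a`, then every `γ_a` is imaginary (a positive multiple
of `δ`).
-/

universe u

theorem stmt16 (V : Type u) [AddCommGroup V] [Module ℚ V]
    (Φpos : Set V) (χ : V →ₗ[ℚ] ℝ) (hχ : Function.Injective χ)
    (ht : V →ₗ[ℚ] ℚ) (hpos : ∀ β ∈ Φpos, 0 < ht β)
    (δ : V) (β : V) (hβΦ : β ∈ Φpos) (hβim : ∃ c : ℚ, 0 < c ∧ β = c • δ)
    (b : ℕ) (γ : Fin b → V) (hγ : ∀ a, γ a ∈ Φpos) (hsum : ∑ a, γ a = β)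
    (hcomp :
      (∀ a, χ (γ a) / ((ht (γ a) : ℚ) : ℝ) ≤ χ β / ((ht β : ℚ) : ℝ)) ∨
      (∀ a, χ β / ((ht β : ℚ) : ℝ) ≤ χ (γ a) / ((ht (γ a) : ℚ) : ℝ))) :
    ∀ a, ∃ c : ℚ, 0 < c ∧ γ a = c • δ := by
  obtain ⟨c₀, hc₀, hβδ⟩ := hβim
  have hhtβ : (0 : ℚ) < ht β := hpos β hβΦ
  have hhtβR : (0 : ℝ) < ((ht β : ℚ) : ℝ) := by exact_mod_cast hhtβ
  have hhtγ : ∀ a, (0 : ℚ) < ht (γ a) := fun a => hpos _ (hγ a)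
  have hhtγR : ∀ a, (0 : ℝ) < ((ht (γ a) : ℚ) : ℝ) := fun a => by exact_mod_cast hhtγ a
  set s : ℝ := χ β / ((ht β : ℚ) : ℝ) with hs
  -- key: each χ (γ a) = s * ht (γ a)
  have hχsum : ∑ a, χ (γ a) = χ β := by
    rw [← hsum]; simp [map_sum]
  have hhtsum : ∑ a, ((ht (γ a) : ℚ) : ℝ) = ((ht β : ℚ) : ℝ) := by
    rw [← hsum]; push_cast [map_sum]; ring
  have key : ∀ a, χ (γ a) = s * ((ht (γ a) : ℚ) : ℝ) := by
    rcases hcomp with h | h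
    · have hle : ∀ a, χ (γ a) ≤ s * ((ht (γ a) : ℚ) : ℝ) := fun a => by
        have := h a
        rw [div_le_iff₀ (hhtγR a)] at this
        linarith [this]
      have hsum0 : ∑ a, (s * ((ht (γ a) : ℚ) : ℝ) - χ (γ a)) = 0 := by
        rw [Finset.sum_sub_distrib, ← Finset.mul_sum, hhtsum, hχsum, hs,
          div_mul_cancel₀ _ (ne_of_gt hhtβR), sub_self]
      intro a
      have := (Finset.sum_eq_zero_iff_of_nonneg
        (fun i _ => sub_nonneg.mpr (hle i))).mp hsum0 a (Finset.mem_univ a)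
      linarith
    · have hle : ∀ a, s * ((ht (γ a) : ℚ) : ℝ) ≤ χ (γ a) := fun a => by
        have := h a
        rw [le_div_iff₀ (hhtγR a)] at this
        linarith [this]
      have hsum0 : ∑ a, (χ (γ a) - s * ((ht (γ a) : ℚ) : ℝ)) = 0 := by
        rw [Finset.sum_sub_distrib, ← Finset.mul_sum, hhtsum, hχsum, hs,
          div_mul_cancel₀ _ (ne_of_gt hhtβR), sub_self]
      intro a
      have := (Finset.sum_eq_zero_iff_of_nonneg
        (fun i _ => sub_nonneg.mpr (hle i))).mp hsum0 a (Finset.mem_univ a)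
      linarith
  intro a
  refine ⟨ht (γ a) * c₀ / ht β, div_pos (mul_pos (hhtγ a) hc₀) hhtβ, ?_⟩
  apply hχ
  have hχβ : χ β = (c₀ : ℝ) * χ δ := by
    rw [hβδ, map_smul]; simp [Rat.smul_def]
  have : χ ((ht (γ a) * c₀ / ht β) • δ) = ((ht (γ a) * c₀ / ht β : ℚ) : ℝ) * χ δ := by
    rw [map_smul]; simp [Rat.smul_def]
  rw [this, key a, hs, hχβ]
  push_cast
  field_simp
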